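/- arXiv:1301.3816 — 5 statements merged into one kernel-verified Lean document; each statement's English description precedes it below -/
import Mathlib

section
/- Suppose (A, B) ∈ ℝ^{ℓ×p} × ℝ^{m×p} is a global minimizer of J₄ over ℝ^{ℓ×p} × ℝ^{m×p}. Then for any C ∈ ℝ^{ℓ×m} satisfying A = C·B, the pair (C, L) with L = B·Bᵀ is a global minimizer of J₂ over ℝ^{ℓ×m} × S^{m,p}_+. -/
open Matrix

/-- Frobenius inner product `⟨A, B⟩_F = tr(Aᵀ B)`. -/
noncomputable def frobInner {k l : ℕ} (A B : Matrix (Fin k) (Fin l) ℝ) : ℝ :=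
  (Aᵀ * B).trace

/-- The objective `J₂(C, L)` of problem (2). -/
noncomputable def J2 {l m : ℕ} (K : Matrix (Fin l) (Fin l) ℝ)
    (W Y : Matrix (Fin l) (Fin m) ℝ) (lam : ℝ)
    (C : Matrix (Fin l) (Fin m) ℝ) (L : Matrix (Fin m) (Fin m) ℝ) : ℝ :=
  frobInner (W ⊙ (Y - K * C * L)) (W ⊙ (Y - K * C * L)) / (2 * lam)
    + frobInner (Cᵀ * K * C) L / 2 + L.trace / 2

/-- The objective `J₄(A, B)` of problem (4). -/
noncomputable def J4 {l m p : ℕ} (K : Matrix (Fin l) (Fin l) ℝ)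
    (W Y : Matrix (Fin l) (Fin m) ℝ) (lam : ℝ)
    (A : Matrix (Fin l) (Fin p) ℝ) (B : Matrix (Fin m) (Fin p) ℝ) : ℝ :=
  frobInner (W ⊙ (Y - K * A * Bᵀ)) (W ⊙ (Y - K * A * Bᵀ)) / (2 * lam)
    + frobInner A (K * A) / 2 + frobInner B B / 2

/-- A real PSD matrix of rank at most `p` factors as `B * Bᵀ` with `B` of width `p`. -/
lemma exists_factor {m p : ℕ} (L : Matrix (Fin m) (Fin m) ℝ) (hL : L.PosSemidef)
    (hr : L.rank ≤ p) : ∃ B : Matrix (Fin m) (Fin p) ℝ, L = B * Bᵀ := by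
  classical
  have hH := hL.1
  set f := hH.eigenvalues with hf
  have hcard : Fintype.card {i // f i ≠ 0} ≤ Fintype.card (Fin p) := by
    rw [← hH.rank_eq_card_non_zero_eigs, Fintype.card_fin]
    exact hr
  obtain ⟨e⟩ : Nonempty ({i // f i ≠ 0} ↪ Fin p) := Function.Embedding.nonempty_of_card_le hcard
  set S : Matrix (Fin m) (Fin p) ℝ :=
    Matrix.of (fun i j => if h : f i ≠ 0 then (if e ⟨i, h⟩ = j then Real.sqrt (f i) else 0) else 0)
    with hS
  have hSS : S * Sᵀ = Matrix.diagonal f := by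
    ext i k
    rw [Matrix.mul_apply]
    by_cases hik : i = k
    · subst hik
      by_cases hi : f i = 0
      · simp [hS, hi, Matrix.diagonal_apply_eq]
      · have key : ∀ j, S i j * (Sᵀ) j i = if j = e ⟨i, hi⟩ then f i else 0 := by
          intro j
          simp only [hS, Matrix.transpose_apply, Matrix.of_apply]
          rw [dif_pos hi]
          by_cases hj : e ⟨i, hi⟩ = j
          · rw [if_pos hj, if_pos hj.symm,
              Real.mul_self_sqrt (hL.eigenvalues_nonneg i)]
          · rw [if_neg hj, if_neg (fun h => hj h.symm), zero_mul]
        rw [Finset.sum_congr rfl (fun j _ => key j), Matrix.diagonal_apply_eq]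
        simp
    · have key : ∀ j, S i j * (Sᵀ) j k = 0 := by
        intro j
        simp only [hS, Matrix.transpose_apply, Matrix.of_apply]
        by_cases hi : f i ≠ 0
        · by_cases hk : f k ≠ 0
          · rw [dif_pos hi, dif_pos hk]
            by_cases h1 : e ⟨i, hi⟩ = j
            · by_cases h2 : e ⟨k, hk⟩ = j
              · exact absurd (congrArg Subtype.val (e.injective (h1.trans h2.symm))) hik
              · rw [if_neg h2, mul_zero]
            · rw [if_neg h1, zero_mul]
          · rw [dif_neg hk, mul_zero]
        · rw [dif_neg hi, zero_mul]
      rw [Finset.sum_congr rfl (fun j _ => key j), Matrix.diagonal_apply_ne _ hik]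
      simp
  refine ⟨(hH.eigenvectorUnitary : Matrix (Fin m) (Fin m) ℝ) * S, ?_⟩
  have hspec := hH.spectral_theorem
  have hstar : (star (hH.eigenvectorUnitary : Matrix (Fin m) (Fin m) ℝ)) =
      ((hH.eigenvectorUnitary : Matrix (Fin m) (Fin m) ℝ))ᵀ := by
    rw [Matrix.star_eq_conjTranspose, Matrix.conjTranspose_eq_transpose_of_trivial]
  have hD : Matrix.diagonal (RCLike.ofReal ∘ hH.eigenvalues : Fin m → ℝ)
      = Matrix.diagonal f := by
    congr 1
  rw [hD, Unitary.conjStarAlgAut_apply, hstar] at hspec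
  rw [Matrix.transpose_mul, ← Matrix.mul_assoc, Matrix.mul_assoc _ S Sᵀ, hSS]
  exact hspec

/-- Key identity: `J2 K W Y lam C (B * Bᵀ) = J4 K W Y lam (C * B) B` when `K` is symmetric. -/
lemma J2_eq_J4 {l m p : ℕ} (K : Matrix (Fin l) (Fin l) ℝ) (hKs : Kᵀ = K)
    (W Y : Matrix (Fin l) (Fin m) ℝ) (lam : ℝ)
    (C : Matrix (Fin l) (Fin m) ℝ) (B : Matrix (Fin m) (Fin p) ℝ) :
    J2 K W Y lam C (B * Bᵀ) = J4 K W Y lam (C * B) B := by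
  unfold J2 J4 frobInner
  have h1 : K * C * (B * Bᵀ) = K * (C * B) * Bᵀ := by
    simp [Matrix.mul_assoc]
  have h2 : ((Cᵀ * K * C)ᵀ * (B * Bᵀ)).trace = ((C * B)ᵀ * (K * (C * B))).trace := by
    have : (Cᵀ * K * C)ᵀ = Cᵀ * K * C := by
      simp [Matrix.transpose_mul, hKs, Matrix.mul_assoc]
    rw [this, ← Matrix.mul_assoc, Matrix.trace_mul_comm]
    simp [Matrix.transpose_mul, Matrix.mul_assoc]
  have h3 : (B * Bᵀ).trace = (Bᵀ * B).trace := Matrix.trace_mul_comm B Bᵀ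
  rw [h1, h2, h3]

/-- If `(A, B)` is a global minimizer of `J₄`, then for every `C` with `A = C * B`,
the pair `(C, L)` with `L = B * Bᵀ` is a global minimizer of `J₂` over
`ℝ^{ℓ×m} × S^{m,p}_+`. -/
theorem stmt0 {l m p : ℕ} (hl : 1 ≤ l) (hm : 1 ≤ m) (hp : 1 ≤ p)
    (K : Matrix (Fin l) (Fin l) ℝ) (hK : K.PosSemidef)
    (W Y : Matrix (Fin l) (Fin m) ℝ)
    (hW : ∀ i j, W i j = 0 ∨ W i j = 1) (hY : W ⊙ Y = Y)
    (lam : ℝ) (hlam : 0 < lam)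
    (A : Matrix (Fin l) (Fin p) ℝ) (B : Matrix (Fin m) (Fin p) ℝ)
    (hmin : ∀ (A' : Matrix (Fin l) (Fin p) ℝ) (B' : Matrix (Fin m) (Fin p) ℝ),
      J4 K W Y lam A B ≤ J4 K W Y lam A' B')
    (C : Matrix (Fin l) (Fin m) ℝ) (hC : A = C * B) :
    (B * Bᵀ).PosSemidef ∧ (B * Bᵀ).rank ≤ p ∧
      ∀ (C' : Matrix (Fin l) (Fin m) ℝ) (L' : Matrix (Fin m) (Fin m) ℝ),
        L'.PosSemidef → L'.rank ≤ p →
        J2 K W Y lam C (B * Bᵀ) ≤ J2 K W Y lam C' L' := by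
  have hKs : Kᵀ = K := by
    have := hK.1
    rwa [Matrix.IsHermitian, Matrix.conjTranspose_eq_transpose_of_trivial] at this
  refine ⟨?_, ?_, ?_⟩
  · have := Matrix.posSemidef_self_mul_conjTranspose B
    rwa [Matrix.conjTranspose_eq_transpose_of_trivial] at this
  · calc (B * Bᵀ).rank ≤ B.rank := Matrix.rank_mul_le_left B Bᵀ
      _ ≤ p := Matrix.rank_le_width B
  · intro C' L' hL' hrank
    obtain ⟨B', rfl⟩ := exists_factor L' hL' hrank
    calc J2 K W Y lam C (B * Bᵀ) = J4 K W Y lam A B := by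
          rw [J2_eq_J4 K hKs, ← hC]
      _ ≤ J4 K W Y lam (C' * B') B' := hmin _ _
      _ = J2 K W Y lam C' (B' * B'ᵀ) := (J2_eq_J4 K hKs W Y lam C' B').symm
end

section
/- Suppose Θ ∈ ℝ^{ℓ×m} is a global minimizer of G(Θ) = ‖Y − KΘ‖_W²/(2λ) + tr((ΘᵀKΘ)^{1/2}) over the set of matrices Θ ∈ ℝ^{ℓ×m} with rank(Θ) ≤ p, where (ΘᵀKΘ)^{1/2} is the positive semidefinite square root of ΘᵀKΘ. Let L = (ΘᵀKΘ)^{1/2}, and let C ∈ ℝ^{ℓ×m} be any matrix with C·L = Θ. Then the pair (C, L) is a global minimizer of J₂ over ℝ^{ℓ×m} × S^{m,p}_+. -/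
open Matrix

/-- Trace of the positive semidefinite square root of a matrix (`0` if the matrix is
not positive semidefinite, a case which never occurs below). -/
noncomputable def traceSqrt {m : ℕ} (M : Matrix (Fin m) (Fin m) ℝ) : ℝ :=
  letI := Classical.propDecidable M.PosSemidef
  if h : M.PosSemidef then
    (h.1.eigenvectorUnitary.1 * diagonal (Real.sqrt ∘ h.1.eigenvalues) *
      (star h.1.eigenvectorUnitary : Matrix (Fin m) (Fin m) ℝ)).trace else 0

/-- The objective `G(Θ)` of the reduced-rank problem of Lemma 2. -/
noncomputable def Gobj {l m : ℕ} (K : Matrix (Fin l) (Fin l) ℝ)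
    (W Y : Matrix (Fin l) (Fin m) ℝ) (lam : ℝ)
    (Θ : Matrix (Fin l) (Fin m) ℝ) : ℝ :=
  frobInner (W ⊙ (Y - K * Θ)) (W ⊙ (Y - K * Θ)) / (2 * lam)
    + traceSqrt (Θᵀ * K * Θ)

section Auxiliary

section SqrtCompat

open scoped MatrixOrder

noncomputable def Matrix.PosSemidef.sqrt {n : ℕ} {A : Matrix (Fin n) (Fin n) ℝ}
    (_ : A.PosSemidef) : Matrix (Fin n) (Fin n) ℝ := CFC.sqrt A

lemma Matrix.PosSemidef.posSemidef_sqrt {n : ℕ} {A : Matrix (Fin n) (Fin n) ℝ}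
    (hA : A.PosSemidef) : hA.sqrt.PosSemidef := (CFC.sqrt_nonneg A).posSemidef

lemma Matrix.PosSemidef.sqrt_mul_self {n : ℕ} {A : Matrix (Fin n) (Fin n) ℝ}
    (hA : A.PosSemidef) : hA.sqrt * hA.sqrt = A := CFC.sqrt_mul_sqrt_self A hA.nonneg

lemma Matrix.PosSemidef.eq_sqrt_of_sq_eq {n : ℕ} {A B : Matrix (Fin n) (Fin n) ℝ}
    (hA : A.PosSemidef) (hB : B.PosSemidef) (h : A ^ 2 = B) : A = hB.sqrt :=
  ((CFC.sqrt_eq_iff B A hB.nonneg hA.nonneg).mpr (by rw [← h, pow_two])).symm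

end SqrtCompat

private lemma psdT {a b : ℕ} (A : Matrix (Fin a) (Fin b) ℝ) : (Aᵀ * A).PosSemidef := by
  have := posSemidef_conjTranspose_mul_self A
  rwa [conjTranspose_eq_transpose_of_trivial] at this

private lemma tr_nonneg {n : ℕ} {A : Matrix (Fin n) (Fin n) ℝ} (hA : A.PosSemidef) :
    0 ≤ A.trace := by
  refine Finset.sum_nonneg fun i _ => ?_
  exact hA.diag_nonneg

private lemma tr_mul_nonneg {n : ℕ} {A B : Matrix (Fin n) (Fin n) ℝ}
    (hA : A.PosSemidef) (hB : B.PosSemidef) : 0 ≤ (A * B).trace := by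
  have hs := hA.posSemidef_sqrt
  have h3 : (hA.sqrt * B * hA.sqrt).PosSemidef := by
    have := hB.mul_mul_conjTranspose_same hA.sqrt
    rwa [hs.1] at this
  have h2 : (A * B).trace = (hA.sqrt * B * hA.sqrt).trace := by
    conv_lhs => rw [← hA.sqrt_mul_self]
    rw [Matrix.mul_assoc, trace_mul_comm, Matrix.mul_assoc]
  exact h2 ▸ tr_nonneg h3

private lemma psd_one_sub {n : ℕ} {R : Matrix (Fin n) (Fin n) ℝ}
    (hsymm : Rᵀ = R) (hidem : R * R = R) : (1 - R).PosSemidef := by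
  have h : (1 - R)ᵀ * (1 - R) = 1 - R := by
    have e : (1 - R) * (1 - R) = 1 - R - R + R * R := by noncomm_ring
    rw [transpose_sub, transpose_one, hsymm, e, hidem]
    abel
  have := psdT (1 - R)
  rwa [h] at this

private lemma tr_inner_le {a b : ℕ} (X Z : Matrix (Fin a) (Fin b) ℝ) :
    (Xᵀ * Z).trace ≤ ((Xᵀ * X).trace + (Zᵀ * Z).trace) / 2 := by
  have h0 : 0 ≤ ((X - Z)ᵀ * (X - Z)).trace := tr_nonneg (psdT _)
  have hexp : ((X - Z)ᵀ * (X - Z)).trace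
      = (Xᵀ * X).trace - (Xᵀ * Z).trace - (Zᵀ * X).trace + (Zᵀ * Z).trace := by
    have e : (X - Z)ᵀ * (X - Z) = Xᵀ * X - Xᵀ * Z - Zᵀ * X + Zᵀ * Z := by
      rw [transpose_sub, Matrix.sub_mul, Matrix.mul_sub, Matrix.mul_sub]; abel
    rw [e, trace_add, trace_sub, trace_sub]
  have hZX : (Zᵀ * X).trace = (Xᵀ * Z).trace := by
    rw [← trace_transpose, transpose_mul, transpose_transpose]
  rw [hexp, hZX] at h0
  linarith

private lemma exists_spectral {n : ℕ} {A : Matrix (Fin n) (Fin n) ℝ} (hA : A.PosSemidef) :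
    ∃ (V : Matrix (Fin n) (Fin n) ℝ) (lam : Fin n → ℝ),
      Vᵀ * V = 1 ∧ V * Vᵀ = 1 ∧ (∀ i, 0 ≤ lam i) ∧ A = V * diagonal lam * Vᵀ := by
  refine ⟨(hA.1.eigenvectorUnitary : Matrix (Fin n) (Fin n) ℝ), hA.1.eigenvalues, ?_, ?_,
    hA.eigenvalues_nonneg, ?_⟩
  · have := mem_unitaryGroup_iff'.mp hA.1.eigenvectorUnitary.2
    rwa [star_eq_conjTranspose, conjTranspose_eq_transpose_of_trivial] at this
  · have := mem_unitaryGroup_iff.mp hA.1.eigenvectorUnitary.2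
    rwa [star_eq_conjTranspose, conjTranspose_eq_transpose_of_trivial] at this
  · have := hA.1.spectral_theorem
    rw [Unitary.conjStarAlgAut_apply, star_eq_conjTranspose,
      conjTranspose_eq_transpose_of_trivial] at this
    simpa [RCLike.ofReal_real_eq_id, Function.id_comp] using this

private lemma sqrt_trace_eq {n : ℕ} {A : Matrix (Fin n) (Fin n) ℝ} (hA : A.PosSemidef)
    (V : Matrix (Fin n) (Fin n) ℝ) (lam : Fin n → ℝ)
    (hV1 : Vᵀ * V = 1) (hnn : ∀ i, 0 ≤ lam i)
    (hspec : A = V * diagonal lam * Vᵀ) :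
    hA.sqrt.trace = ∑ i, Real.sqrt (lam i) := by
  have hS0psd : (V * diagonal (fun i => Real.sqrt (lam i)) * Vᵀ).PosSemidef := by
    have hd : Matrix.PosSemidef (diagonal (fun i => Real.sqrt (lam i)) : Matrix (Fin n) (Fin n) ℝ) :=
      Matrix.PosSemidef.diagonal (fun i => Real.sqrt_nonneg _)
    have := hd.mul_mul_conjTranspose_same V
    rwa [conjTranspose_eq_transpose_of_trivial] at this
  have hmss : (fun i => Real.sqrt (lam i) * Real.sqrt (lam i)) = lam :=
    funext fun i => Real.mul_self_sqrt (hnn i)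
  have hsq : (V * diagonal (fun i => Real.sqrt (lam i)) * Vᵀ) ^ 2 = A := by
    rw [pow_two, hspec]
    calc (V * diagonal (fun i => Real.sqrt (lam i)) * Vᵀ) *
          (V * diagonal (fun i => Real.sqrt (lam i)) * Vᵀ)
        = V * (diagonal (fun i => Real.sqrt (lam i)) * (Vᵀ * V) *
            diagonal (fun i => Real.sqrt (lam i))) * Vᵀ := by
          simp only [Matrix.mul_assoc]
      _ = V * diagonal lam * Vᵀ := by
          rw [hV1, Matrix.mul_one, diagonal_mul_diagonal, hmss]
  have heq := hS0psd.eq_sqrt_of_sq_eq hA hsq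
  rw [← heq, trace_mul_cycle, hV1, Matrix.one_mul, trace_diagonal]

private lemma traceSqrt_eq {n : ℕ} {A : Matrix (Fin n) (Fin n) ℝ} (hA : A.PosSemidef) :
    traceSqrt A = hA.sqrt.trace := by
  have h1 : (star (hA.1.eigenvectorUnitary : Matrix (Fin n) (Fin n) ℝ)) *
      (hA.1.eigenvectorUnitary : Matrix (Fin n) (Fin n) ℝ) = 1 :=
    mem_unitaryGroup_iff'.mp hA.1.eigenvectorUnitary.2
  have h2 := h1
  rw [star_eq_conjTranspose, conjTranspose_eq_transpose_of_trivial] at h2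
  have hspec : A = (hA.1.eigenvectorUnitary : Matrix (Fin n) (Fin n) ℝ) *
      diagonal hA.1.eigenvalues * (hA.1.eigenvectorUnitary : Matrix (Fin n) (Fin n) ℝ)ᵀ := by
    have := hA.1.spectral_theorem
    rw [Unitary.conjStarAlgAut_apply, star_eq_conjTranspose,
      conjTranspose_eq_transpose_of_trivial] at this
    simpa [RCLike.ofReal_real_eq_id, Function.id_comp] using this
  unfold traceSqrt
  rw [dif_pos hA, trace_mul_cycle, h1, Matrix.one_mul, trace_diagonal,
    sqrt_trace_eq hA _ _ h2 hA.eigenvalues_nonneg hspec]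
  rfl

private lemma nuclear_aux {a b : ℕ} (P : Matrix (Fin a) (Fin b) ℝ) (Q V : Matrix (Fin b) (Fin b) ℝ)
    (lam : Fin b → ℝ) (hnn : ∀ i, 0 ≤ lam i) (hV1 : Vᵀ * V = 1) (hV2 : V * Vᵀ = 1)
    (hspec : (P * Q)ᵀ * (P * Q) = V * diagonal lam * Vᵀ) :
    ∑ i, Real.sqrt (lam i) ≤ ((Pᵀ * P).trace + (Qᵀ * Q).trace) / 2 := by
  set B := P * Q with hB
  have hconj : Vᵀ * (Bᵀ * B) * V = diagonal lam := by
    rw [hspec]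
    calc Vᵀ * (V * diagonal lam * Vᵀ) * V = (Vᵀ * V) * (diagonal lam * (Vᵀ * V)) := by
          simp only [Matrix.mul_assoc]
      _ = diagonal lam := by rw [hV1, Matrix.one_mul, Matrix.mul_one]
  set g : Fin b → ℝ := fun i => if lam i = 0 then 0 else 1 / Real.sqrt (lam i) with hg
  set e : Fin b → ℝ := fun i => if lam i = 0 then 0 else 1 with he
  have hgl : ∀ i, g i * lam i = Real.sqrt (lam i) := by
    intro i
    by_cases hi : lam i = 0
    · simp [hg, hi]
    · have hpos : 0 < lam i := lt_of_le_of_ne (hnn i) (Ne.symm hi)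
      have hs0 : Real.sqrt (lam i) ≠ 0 := ne_of_gt (Real.sqrt_pos.mpr hpos)
      have hss : Real.sqrt (lam i) * Real.sqrt (lam i) = lam i := Real.mul_self_sqrt (hnn i)
      simp only [hg, if_neg hi]
      field_simp
      exact (Real.sq_sqrt (hnn i)).symm
  have hglg : ∀ i, g i * lam i * g i = e i := by
    intro i
    by_cases hi : lam i = 0
    · simp [hg, he, hi]
    · have hpos : 0 < lam i := lt_of_le_of_ne (hnn i) (Ne.symm hi)
      have hs0 : Real.sqrt (lam i) ≠ 0 := ne_of_gt (Real.sqrt_pos.mpr hpos)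
      rw [hgl i]
      simp only [hg, he, if_neg hi]
      field_simp
  have hge : ∀ i, g i * e i = g i := by
    intro i
    by_cases hi : lam i = 0 <;> simp [hg, he, hi]
  set U := B * V * diagonal g with hU
  have hUt : Uᵀ = diagonal g * (Vᵀ * Bᵀ) := by
    rw [hU, transpose_mul, transpose_mul, diagonal_transpose]
  have hUtU : Uᵀ * U = diagonal e := by
    rw [hUt, hU]
    calc diagonal g * (Vᵀ * Bᵀ) * (B * V * diagonal g)
        = diagonal g * (Vᵀ * (Bᵀ * B) * V) * diagonal g := by simp only [Matrix.mul_assoc]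
      _ = diagonal g * diagonal lam * diagonal g := by rw [hconj]
      _ = diagonal e := by
          rw [diagonal_mul_diagonal, diagonal_mul_diagonal]
          exact congrArg _ (funext hglg)
  have hUBV : Uᵀ * (B * V) = diagonal fun i => Real.sqrt (lam i) := by
    rw [hUt]
    calc diagonal g * (Vᵀ * Bᵀ) * (B * V)
        = diagonal g * (Vᵀ * (Bᵀ * B) * V) := by simp only [Matrix.mul_assoc]
      _ = diagonal g * diagonal lam := by rw [hconj]
      _ = diagonal fun i => Real.sqrt (lam i) := by
          rw [diagonal_mul_diagonal]
          exact congrArg _ (funext hgl)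
  have hUe : U * diagonal e = U := by
    rw [hU]
    simp only [Matrix.mul_assoc, diagonal_mul_diagonal]
    rw [show (fun i => g i * e i) = g from funext hge]
  have hproj : (U * Uᵀ) * (U * Uᵀ) = U * Uᵀ := by
    calc (U * Uᵀ) * (U * Uᵀ) = U * (Uᵀ * U) * Uᵀ := by simp only [Matrix.mul_assoc]
      _ = U * diagonal e * Uᵀ := by rw [hUtU]
      _ = U * Uᵀ := by rw [hUe]
  have hsymUU : (U * Uᵀ)ᵀ = U * Uᵀ := by rw [transpose_mul, transpose_transpose]
  have hpsd1 : (1 - U * Uᵀ).PosSemidef := psd_one_sub hsymUU hproj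
  have htr : ∑ i, Real.sqrt (lam i) = ((Pᵀ * U)ᵀ * (Q * V)).trace := by
    rw [transpose_mul, transpose_transpose]
    have : Uᵀ * P * (Q * V) = Uᵀ * (B * V) := by
      rw [hB]; simp only [Matrix.mul_assoc]
    rw [this, hUBV, trace_diagonal]
  have hle1 : ((Pᵀ * U)ᵀ * (Q * V)).trace
      ≤ (((Pᵀ * U)ᵀ * (Pᵀ * U)).trace + ((Q * V)ᵀ * (Q * V)).trace) / 2 := tr_inner_le _ _
  have hQV : ((Q * V)ᵀ * (Q * V)).trace = (Qᵀ * Q).trace := by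
    rw [trace_mul_comm, transpose_mul]
    calc (Q * V * (Vᵀ * Qᵀ)).trace = (Q * (V * Vᵀ) * Qᵀ).trace := by
          simp only [Matrix.mul_assoc]
      _ = (Qᵀ * Q).trace := by rw [hV2, Matrix.mul_one, trace_mul_comm]
  have hPU : ((Pᵀ * U)ᵀ * (Pᵀ * U)).trace ≤ (Pᵀ * P).trace := by
    have h1 : ((Pᵀ * U)ᵀ * (Pᵀ * U)).trace = ((P * Pᵀ) * (U * Uᵀ)).trace := by
      rw [transpose_mul, transpose_transpose,
        show Uᵀ * P * (Pᵀ * U) = Uᵀ * (P * Pᵀ * U) by simp only [Matrix.mul_assoc],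
        trace_mul_comm, Matrix.mul_assoc]
    have h2 : 0 ≤ ((P * Pᵀ) * (1 - U * Uᵀ)).trace := by
      refine tr_mul_nonneg ?_ hpsd1
      have := psdT Pᵀ
      rwa [transpose_transpose] at this
    have h3 : ((P * Pᵀ) * (1 - U * Uᵀ)).trace
        = (P * Pᵀ).trace - ((P * Pᵀ) * (U * Uᵀ)).trace := by
      rw [Matrix.mul_sub, Matrix.mul_one, trace_sub]
    have h4 : (P * Pᵀ).trace = (Pᵀ * P).trace := trace_mul_comm _ _
    rw [h1]
    linarith
  rw [htr]
  linarith

private lemma traceeq_aux {n : ℕ} (M V : Matrix (Fin n) (Fin n) ℝ) (lam : Fin n → ℝ)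
    (hV1 : Vᵀ * V = 1)
    (h : (V * diagonal lam * Vᵀ) * M * (V * diagonal lam * Vᵀ)
        = (V * diagonal lam * Vᵀ) * (V * diagonal lam * Vᵀ)) :
    (M * (V * diagonal lam * Vᵀ)).trace = (V * diagonal lam * Vᵀ).trace := by
  have cancel2 : ∀ X : Matrix (Fin n) (Fin n) ℝ, Vᵀ * (V * X) = X := fun X => by
    rw [← Matrix.mul_assoc, hV1, Matrix.one_mul]
  have e1 : Vᵀ * ((V * diagonal lam * Vᵀ) * M * (V * diagonal lam * Vᵀ)) * V
      = diagonal lam * (Vᵀ * M * V) * diagonal lam := by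
    simp only [Matrix.mul_assoc, cancel2, hV1, Matrix.mul_one]
  have e2 : Vᵀ * ((V * diagonal lam * Vᵀ) * (V * diagonal lam * Vᵀ)) * V
      = diagonal lam * diagonal lam := by
    simp only [Matrix.mul_assoc, cancel2, hV1, Matrix.mul_one]
  have key : diagonal lam * (Vᵀ * M * V) * diagonal lam = diagonal lam * diagonal lam := by
    rw [← e1, ← e2, h]
  have hdiag : ∀ i, (Vᵀ * M * V) i i * lam i = lam i := by
    intro i
    have hent := congrFun (congrFun key i) i
    rw [Matrix.mul_diagonal, Matrix.diagonal_mul, diagonal_mul_diagonal,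
      Matrix.diagonal_apply_eq] at hent
    by_cases hi : lam i = 0
    · simp [hi]
    · have h2 : lam i * (Vᵀ * M * V) i i * lam i = lam i * lam i := hent
      have h3 : lam i * (Vᵀ * M * V) i i = lam i := mul_right_cancel₀ hi h2
      rw [mul_comm]; exact h3
  have t1 : (M * (V * diagonal lam * Vᵀ)).trace = (diagonal lam * (Vᵀ * M * V)).trace := by
    rw [trace_mul_comm]
    rw [show V * diagonal lam * Vᵀ * M = V * (diagonal lam * (Vᵀ * M)) by
      simp only [Matrix.mul_assoc]]
    rw [trace_mul_comm]
    rw [show diagonal lam * (Vᵀ * M) * V = diagonal lam * (Vᵀ * M * V) by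
      simp only [Matrix.mul_assoc]]
  have t2 : (V * diagonal lam * Vᵀ).trace = ∑ i, lam i := by
    rw [trace_mul_cycle, hV1, Matrix.one_mul, trace_diagonal]
  rw [t1, t2]
  have t3 : (diagonal lam * (Vᵀ * M * V)).trace = ∑ i, lam i * (Vᵀ * M * V) i i := by
    simp [Matrix.trace, Matrix.diag, Matrix.diagonal_mul]
  rw [t3]
  refine Finset.sum_congr rfl fun i _ => ?_
  rw [mul_comm]
  exact hdiag i

end Auxiliary

/-- If `Θ` is a global minimizer of `G` over matrices of rank at most `p`, then with
`L = (Θᵀ K Θ)^{1/2}` (characterized as the PSD matrix with `L * L = Θᵀ * K * Θ`) and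
any `C` with `C * L = Θ`, the pair `(C, L)` is a global minimizer of `J₂` over
`ℝ^{ℓ×m} × S^{m,p}_+`. -/
theorem stmt1 {l m p : ℕ} (hl : 1 ≤ l) (hm : 1 ≤ m) (hp : 1 ≤ p)
    (K : Matrix (Fin l) (Fin l) ℝ) (hK : K.PosSemidef)
    (W Y : Matrix (Fin l) (Fin m) ℝ)
    (hW : ∀ i j, W i j = 0 ∨ W i j = 1) (hY : W ⊙ Y = Y)
    (lam : ℝ) (hlam : 0 < lam)
    (Θ : Matrix (Fin l) (Fin m) ℝ) (hΘrank : Θ.rank ≤ p)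
    (hmin : ∀ Θ' : Matrix (Fin l) (Fin m) ℝ, Θ'.rank ≤ p →
      Gobj K W Y lam Θ ≤ Gobj K W Y lam Θ')
    (L : Matrix (Fin m) (Fin m) ℝ) (hL : L.PosSemidef)
    (hLsq : L * L = Θᵀ * K * Θ)
    (C : Matrix (Fin l) (Fin m) ℝ) (hCL : C * L = Θ) :
    L.rank ≤ p ∧
      ∀ (C' : Matrix (Fin l) (Fin m) ℝ) (L' : Matrix (Fin m) (Fin m) ℝ),
        L'.PosSemidef → L'.rank ≤ p →
        J2 K W Y lam C L ≤ J2 K W Y lam C' L' := by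
  have hKt : Kᵀ = K := by
    rw [← conjTranspose_eq_transpose_of_trivial]; exact hK.1
  have hLt : Lᵀ = L := by
    rw [← conjTranspose_eq_transpose_of_trivial]; exact hL.1
  have hΘpsd : (Θᵀ * K * Θ).PosSemidef := by
    have := hK.conjTranspose_mul_mul_same Θ
    rwa [conjTranspose_eq_transpose_of_trivial] at this
  have hLsqrt : L = hΘpsd.sqrt := hL.eq_sqrt_of_sq_eq hΘpsd (by rw [pow_two, hLsq])
  -- rank bound for L
  have hrankL : L.rank ≤ p := by
    have h1 : L.rank = (Lᵀ * L).rank := (rank_transpose_mul_self L).symm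
    rw [h1, hLt, hLsq]
    calc (Θᵀ * K * Θ).rank ≤ Θᵀ.rank := by
          rw [Matrix.mul_assoc]; exact rank_mul_le_left _ _
      _ = Θ.rank := rank_transpose Θ
      _ ≤ p := hΘrank
  refine ⟨hrankL, fun C' L' hL' hrankL' => ?_⟩
  -- Step 1 : J2 C L = Gobj Θ
  have hKCL : K * C * L = K * Θ := by rw [Matrix.mul_assoc, hCL]
  have hMsym : (Cᵀ * K * C)ᵀ = Cᵀ * K * C := by
    rw [transpose_mul, transpose_mul, transpose_transpose, hKt, ← Matrix.mul_assoc]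
  have hLML : L * (Cᵀ * K * C) * L = L * L := by
    rw [hLsq]
    calc L * (Cᵀ * K * C) * L = (C * L)ᵀ * K * (C * L) := by
          rw [transpose_mul, hLt]; simp only [Matrix.mul_assoc]
      _ = Θᵀ * K * Θ := by rw [hCL]
  obtain ⟨V, ev, hV1, hV2, hnn, hdec⟩ := exists_spectral hL
  have htr1 : ((Cᵀ * K * C) * L).trace = L.trace := by
    rw [hdec]
    refine traceeq_aux _ _ _ hV1 ?_
    rw [← hdec]; exact hLML
  have hts : traceSqrt (Θᵀ * K * Θ) = L.trace := by
    rw [traceSqrt_eq hΘpsd, ← hLsqrt]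
  have hJG : J2 K W Y lam C L = Gobj K W Y lam Θ := by
    unfold J2 Gobj frobInner
    rw [hKCL, hts, hMsym, htr1]
    ring
  -- Step 2 : Gobj Θ' ≤ J2 C' L' for Θ' = C' * L'
  have hKst : hK.sqrtᵀ = hK.sqrt := by
    rw [← conjTranspose_eq_transpose_of_trivial]; exact hK.posSemidef_sqrt.1
  have hL's : hL'.sqrt * hL'.sqrt = L' := hL'.sqrt_mul_self
  have hL'st : hL'.sqrtᵀ = hL'.sqrt := by
    rw [← conjTranspose_eq_transpose_of_trivial]; exact hL'.posSemidef_sqrt.1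
  have hΘ'psd : ((C' * L')ᵀ * K * (C' * L')).PosSemidef := by
    have := hK.conjTranspose_mul_mul_same (C' * L')
    rwa [conjTranspose_eq_transpose_of_trivial] at this
  -- factorization
  have hPQ : (hK.sqrt * C' * hL'.sqrt) * hL'.sqrt = hK.sqrt * (C' * L') := by
    rw [show hK.sqrt * C' * hL'.sqrt * hL'.sqrt = hK.sqrt * (C' * (hL'.sqrt * hL'.sqrt)) by
      simp only [Matrix.mul_assoc], hL's]
  have hBtB : ((hK.sqrt * C' * hL'.sqrt) * hL'.sqrt)ᵀ * ((hK.sqrt * C' * hL'.sqrt) * hL'.sqrt)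
      = (C' * L')ᵀ * K * (C' * L') := by
    rw [hPQ, transpose_mul, hKst]
    calc (C' * L')ᵀ * hK.sqrt * (hK.sqrt * (C' * L'))
        = (C' * L')ᵀ * ((hK.sqrt * hK.sqrt) * (C' * L')) := by simp only [Matrix.mul_assoc]
      _ = (C' * L')ᵀ * K * (C' * L') := by rw [hK.sqrt_mul_self, Matrix.mul_assoc]
  obtain ⟨V2, ev2, hW1, hW2, hnn2, hdec2⟩ := exists_spectral hΘ'psd
  have hts2 : traceSqrt ((C' * L')ᵀ * K * (C' * L')) = ∑ i, Real.sqrt (ev2 i) := by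
    rw [traceSqrt_eq hΘ'psd]
    exact sqrt_trace_eq hΘ'psd V2 ev2 hW1 hnn2 hdec2
  have hnuc : ∑ i, Real.sqrt (ev2 i)
      ≤ (((hK.sqrt * C' * hL'.sqrt)ᵀ * (hK.sqrt * C' * hL'.sqrt)).trace
          + (hL'.sqrtᵀ * hL'.sqrt).trace) / 2 := by
    refine nuclear_aux (hK.sqrt * C' * hL'.sqrt) hL'.sqrt V2 ev2 hnn2 hW1 hW2 ?_
    rw [hBtB]; exact hdec2
  have hPtP : ((hK.sqrt * C' * hL'.sqrt)ᵀ * (hK.sqrt * C' * hL'.sqrt)).trace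
      = ((C'ᵀ * K * C') * L').trace := by
    rw [transpose_mul, transpose_mul, hKst, hL'st]
    rw [show hL'.sqrt * (C'ᵀ * hK.sqrt) * (hK.sqrt * C' * hL'.sqrt)
        = hL'.sqrt * ((C'ᵀ * (hK.sqrt * hK.sqrt) * C') * hL'.sqrt) by
      simp only [Matrix.mul_assoc], hK.sqrt_mul_self]
    rw [trace_mul_comm]
    rw [show (C'ᵀ * K * C') * hL'.sqrt * hL'.sqrt = (C'ᵀ * K * C') * L' by
      rw [Matrix.mul_assoc, hL's]]
  have hQtQ : (hL'.sqrtᵀ * hL'.sqrt).trace = L'.trace := by rw [hL'st, hL's]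
  have hMsym' : (C'ᵀ * K * C')ᵀ = C'ᵀ * K * C' := by
    rw [transpose_mul, transpose_mul, transpose_transpose, hKt, ← Matrix.mul_assoc]
  have hrankΘ' : (C' * L').rank ≤ p := le_trans (rank_mul_le_right C' L') hrankL'
  have hGJ : Gobj K W Y lam (C' * L') ≤ J2 K W Y lam C' L' := by
    unfold Gobj J2 frobInner
    rw [Matrix.mul_assoc K C' L']
    rw [hts2, hMsym']
    have hx := hnuc
    rw [hPtP, hQtQ] at hx
    linarith
  calc J2 K W Y lam C L = Gobj K W Y lam Θ := hJG
    _ ≤ Gobj K W Y lam (C' * L') := hmin _ hrankΘ'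
    _ ≤ J2 K W Y lam C' L' := hGJ
end

section
/- Let C ∈ ℝ^{ℓ×m} satisfy W ⊙ [K·(W ⊙ C)·B·Bᵀ] + λC = Y. Then C = W ⊙ C, and the matrix A = C·B satisfies the sufficient optimality condition W ⊙ (K A Bᵀ)·B + λA = Y·B. -/
open Matrix

/-- If `C` satisfies `W ⊙ [K (W ⊙ C) B Bᵀ] + λ C = Y`, then `C = W ⊙ C` and
`A = C B` satisfies the sufficient optimality condition
`W ⊙ (K A Bᵀ) B + λ A = Y B`. -/
theorem stmt12 {l m p : ℕ} (hl : 1 ≤ l) (hm : 1 ≤ m) (hp : 1 ≤ p)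
    (K : Matrix (Fin l) (Fin l) ℝ) (hK : K.PosSemidef)
    (W Y : Matrix (Fin l) (Fin m) ℝ)
    (hW : ∀ i j, W i j = 0 ∨ W i j = 1) (hY : W ⊙ Y = Y)
    (lam : ℝ) (hlam : 0 < lam)
    (B : Matrix (Fin m) (Fin p) ℝ) (C : Matrix (Fin l) (Fin m) ℝ)
    (hC : W ⊙ (K * (W ⊙ C) * B * Bᵀ) + lam • C = Y) :
    C = W ⊙ C ∧
      (W ⊙ (K * (C * B) * Bᵀ)) * B + lam • (C * B) = Y * B := by
  have hidem : ∀ X : Matrix (Fin l) (Fin m) ℝ, W ⊙ (W ⊙ X) = W ⊙ X := by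
    intro X
    ext i j
    simp only [Matrix.hadamard_apply]
    rcases hW i j with h | h <;> simp [h]
  have hCW : C = W ⊙ C := by
    have h1 : lam • C = Y - W ⊙ (K * (W ⊙ C) * B * Bᵀ) := by
      rw [← hC]; abel
    have h2 : W ⊙ (lam • C) = lam • C := by
      rw [h1]
      ext i j
      simp only [Matrix.hadamard_apply, Matrix.sub_apply]
      rcases hW i j with h | h
      · have : Y i j = 0 := by rw [← hY]; simp [Matrix.hadamard_apply, h]
        simp [h, this]
      · simp [h]
    have h3 : W ⊙ (lam • C) = lam • (W ⊙ C) := by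
      ext i j; simp [Matrix.hadamard_apply]; ring
    rw [h3] at h2
    have := smul_right_injective (Matrix (Fin l) (Fin m) ℝ) (ne_of_gt hlam) h2
    exact this.symm
  refine ⟨hCW, ?_⟩
  have := congrArg (· * B) hC
  simp only [Matrix.add_mul, Matrix.smul_mul] at this
  rw [← hCW] at this
  rw [show K * (C * B) * Bᵀ = K * C * B * Bᵀ by simp only [Matrix.mul_assoc]]
  exact this
end

section
/- Suppose K = F·Fᵀ for some F ∈ ℝ^{ℓ×r}. Let A_F ∈ ℝ^{r×p} satisfy Fᵀ·(W ⊙ (F A_F Bᵀ))·B + λ A_F = Fᵀ·Y·B, and let A ∈ ℝ^{ℓ×p} satisfy Fᵀ·A = A_F. Then K·[(W ⊙ (K A Bᵀ − Y))·B/λ + A] = 0. -/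
open Matrix

lemma hadamard_sub' {l m : ℕ} (W X Y : Matrix (Fin l) (Fin m) ℝ) :
    W ⊙ (X - Y) = W ⊙ X - W ⊙ Y := by
  ext i j
  simp [Matrix.hadamard, mul_sub]

/-- Suppose `K = F Fᵀ`. If `A_F` satisfies `Fᵀ (W ⊙ (F A_F Bᵀ)) B + λ A_F = Fᵀ Y B`
and `Fᵀ A = A_F`, then `K [(W ⊙ (K A Bᵀ − Y)) B / λ + A] = 0`. -/
theorem stmt14 {l m p r : ℕ} (hl : 1 ≤ l) (hm : 1 ≤ m) (hp : 1 ≤ p) (hr : 1 ≤ r)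
    (W Y : Matrix (Fin l) (Fin m) ℝ)
    (hW : ∀ i j, W i j = 0 ∨ W i j = 1) (hY : W ⊙ Y = Y)
    (lam : ℝ) (hlam : 0 < lam)
    (B : Matrix (Fin m) (Fin p) ℝ)
    (K : Matrix (Fin l) (Fin l) ℝ) (F : Matrix (Fin l) (Fin r) ℝ)
    (hK : K = F * Fᵀ)
    (AF : Matrix (Fin r) (Fin p) ℝ)
    (hAF : Fᵀ * (W ⊙ (F * AF * Bᵀ)) * B + lam • AF = Fᵀ * Y * B)
    (A : Matrix (Fin l) (Fin p) ℝ) (hA : Fᵀ * A = AF) :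
    K * (lam⁻¹ • ((W ⊙ (K * A * Bᵀ - Y)) * B) + A) = 0 := by
  have h1 : K * A * Bᵀ = F * AF * Bᵀ := by
    rw [hK, Matrix.mul_assoc F Fᵀ A, hA]
  have h2 : W ⊙ (K * A * Bᵀ - Y) = W ⊙ (F * AF * Bᵀ) - Y := by
    rw [h1, hadamard_sub', hY]
  have h3 : Fᵀ * ((W ⊙ (F * AF * Bᵀ) - Y) * B) = -(lam • AF) := by
    rw [Matrix.sub_mul, Matrix.mul_sub, ← Matrix.mul_assoc, ← Matrix.mul_assoc]
    have := hAF
    linear_combination (norm := abel) this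
  calc K * (lam⁻¹ • ((W ⊙ (K * A * Bᵀ - Y)) * B) + A)
      = F * (Fᵀ * (lam⁻¹ • ((W ⊙ (K * A * Bᵀ - Y)) * B) + A)) := by
        rw [hK, Matrix.mul_assoc]
    _ = F * (lam⁻¹ • (Fᵀ * ((W ⊙ (F * AF * Bᵀ) - Y) * B)) + AF) := by
        rw [Matrix.mul_add, Matrix.mul_smul, hA, h2]
    _ = 0 := by
        rw [h3, smul_neg, smul_smul, inv_mul_cancel₀ hlam.ne', one_smul,
          neg_add_cancel, Matrix.mul_zero]
end

section
/- Fix n ≥ 1. For binary vectors u, v ∈ {0,1}^n, let d_H(u,v) = (1/n)·|{i : u_i ≠ v_i}| denote the normalized Hamming distance. Let N ≥ 1, and let (id_1, x_1), …, (id_N, x_N) be points where each id_i belongs to an arbitrary set and each x_i ∈ {0,1}^n. Then the N×N matrix M with entries M_{ij} = [id_i = id_j] + exp(−d_H(x_i, x_j)) is symmetric positive semidefinite, where [id_i = id_j] equals 1 if id_i = id_j and 0 otherwise. -/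
open Matrix

/-- Normalized Hamming distance between two binary vectors of length `n`. -/
noncomputable def hammingDistNormalized {n : ℕ} (u v : Fin n → Bool) : ℝ :=
  (Finset.univ.filter fun i => u i ≠ v i).card / n

/-- Equality-indicator kernels are PSD. -/
lemma indicator_psd {N : ℕ} {β : Type*} [DecidableEq β] (f : Fin N → β) :
    (Matrix.of fun i j : Fin N => (if f i = f j then (1:ℝ) else 0)).PosSemidef := by
  rw [Matrix.posSemidef_iff_dotProduct_mulVec]
  constructor
  · ext i j
    simp [Matrix.conjTranspose_apply, eq_comm]
  · intro y
    have key : (star y) ⬝ᵥ ((Matrix.of fun i j : Fin N =>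
        (if f i = f j then (1:ℝ) else 0)) *ᵥ y)
        = ∑ b ∈ Finset.univ.image f,
            (∑ j ∈ Finset.univ.filter (fun j => f j = b), y j)^2 := by
      have h1 : (star y) ⬝ᵥ ((Matrix.of fun i j : Fin N =>
          (if f i = f j then (1:ℝ) else 0)) *ᵥ y)
          = ∑ i, y i * ∑ j ∈ Finset.univ.filter (fun j => f j = f i), y j := by
        simp only [dotProduct, mulVec, Matrix.of_apply, star_trivial]
        refine Finset.sum_congr rfl fun i _ => ?_
        congr 1
        rw [Finset.sum_filter]
        simp [dotProduct, eq_comm, ite_mul]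
      rw [h1]
      rw [← Finset.sum_fiberwise_of_maps_to
        (fun i _ => Finset.mem_image_of_mem f (Finset.mem_univ i))
        (fun i => y i * ∑ j ∈ Finset.univ.filter (fun j => f j = f i), y j)]
      refine Finset.sum_congr rfl fun b _ => ?_
      rw [show (∑ i ∈ Finset.univ.filter (fun i => f i = b),
            y i * ∑ j ∈ Finset.univ.filter (fun j => f j = f i), y j)
          = ∑ i ∈ Finset.univ.filter (fun i => f i = b),
            y i * ∑ j ∈ Finset.univ.filter (fun j => f j = b), y j from
        Finset.sum_congr rfl fun i hi => by rw [(Finset.mem_filter.mp hi).2]]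
      rw [← Finset.sum_mul, sq]
    rw [key]
    exact Finset.sum_nonneg fun b _ => sq_nonneg _

lemma psd_sum {N : ℕ} {ι : Type*} (s : Finset ι) (A : ι → Matrix (Fin N) (Fin N) ℝ)
    (h : ∀ t ∈ s, (A t).PosSemidef) : (∑ t ∈ s, A t).PosSemidef := by
  classical
  induction s using Finset.induction with
  | empty => simpa using Matrix.PosSemidef.zero
  | insert _ _ hx ih =>
    rw [Finset.sum_insert hx]
    exact ((h _ (Finset.mem_insert_self _ _)).add
      (ih fun t ht => h t (Finset.mem_insert_of_mem ht)))

lemma psd_smul {N : ℕ} {c : ℝ} (hc : 0 ≤ c) {A : Matrix (Fin N) (Fin N) ℝ}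
    (hA : A.PosSemidef) : (c • A).PosSemidef := by
  rw [Matrix.posSemidef_iff_dotProduct_mulVec]
  constructor
  · show (c • A)ᴴ = c • A
    rw [Matrix.conjTranspose_smul, star_trivial, hA.1]
  · intro y
    rw [Matrix.smul_mulVec, dotProduct_smul, smul_eq_mul]
    exact mul_nonneg hc (hA.dotProduct_mulVec_nonneg y)

/-- The matrix `M_{ij} = [id_i = id_j] + exp(−d_H(x_i, x_j))` is symmetric positive
semidefinite. -/
theorem stmt19 {n N : ℕ} (hn : 1 ≤ n) (hN : 1 ≤ N)
    {α : Type*} [DecidableEq α]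
    (ids : Fin N → α) (x : Fin N → (Fin n → Bool)) :
    (Matrix.of fun i j : Fin N =>
      (if ids i = ids j then (1 : ℝ) else 0)
        + Real.exp (-(hammingDistNormalized (x i) (x j)))).PosSemidef := by
  classical
  set c : ℝ := Real.exp (-(1 / n)) with hc
  have hc0 : 0 ≤ c := (Real.exp_pos _).le
  have hc1 : c ≤ 1 := Real.exp_le_one_iff.mpr (neg_nonpos.mpr (by positivity))
  -- scalar identity : exp(-d_H u v) = ∑ over subsets
  have scalar : ∀ u v : Fin n → Bool,
      Real.exp (-(hammingDistNormalized u v))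
        = ∑ t ∈ (Finset.univ : Finset (Fin n)).powerset,
            ((1 - c) ^ t.card * c ^ (Finset.univ \ t).card) *
              (if (∀ i ∈ t, u i = v i) then (1:ℝ) else 0) := by
    intro u v
    have hprod : Real.exp (-(hammingDistNormalized u v))
        = ∏ i : Fin n, ((1 - c) * (if u i = v i then (1:ℝ) else 0) + c) := by
      rw [hammingDistNormalized]
      rw [Finset.card_filter]
      push_cast
      rw [Finset.sum_div, ← Finset.sum_neg_distrib, Real.exp_sum]
      refine Finset.prod_congr rfl fun i _ => ?_
      by_cases h : u i = v i <;> simp [h, hc]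
    rw [hprod, Finset.prod_add]
    refine Finset.sum_congr rfl fun t _ => ?_
    rw [Finset.prod_mul_distrib, Finset.prod_const, Finset.prod_const,
      Finset.prod_boole]
    ring
  have key : (Matrix.of fun i j : Fin N =>
      (if ids i = ids j then (1 : ℝ) else 0)
        + Real.exp (-(hammingDistNormalized (x i) (x j))))
      = (Matrix.of fun i j : Fin N => (if ids i = ids j then (1:ℝ) else 0))
        + ∑ t ∈ (Finset.univ : Finset (Fin n)).powerset,
            ((1 - c) ^ t.card * c ^ (Finset.univ \ t).card) •
              (Matrix.of fun i j : Fin N =>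
                (if (fun a : {i // i ∈ t} => x i a.1) = (fun a => x j a.1)
                  then (1:ℝ) else 0)) := by
    ext i j
    simp only [Matrix.add_apply, Matrix.of_apply, Matrix.sum_apply, Matrix.smul_apply,
      smul_eq_mul]
    rw [scalar (x i) (x j)]
    congr 1
    refine Finset.sum_congr rfl fun t _ => ?_
    congr 1
    have h : ((fun a : {i_1 // i_1 ∈ t} => x i a.1) = fun a => x j a.1)
        ↔ ∀ a ∈ t, x i a = x j a := by
      simp [funext_iff, Subtype.forall]
    simp only [h]
  rw [key]
  refine (indicator_psd ids).add (psd_sum _ _ fun t _ => psd_smul ?_ (indicator_psd _))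
  have : (0:ℝ) ≤ 1 - c := by linarith
  positivity
end
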